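/- For every 2n × 2n symplectic matrix χ over F₂ (form Ω = [[0,I],[I,0]]) there exists a symmetric matrix K over F₂ with at most one nonzero entry per row and column (in fact K may be taken diagonal) such that [[I, K],[0, I]] · χ has invertible top-left n × n block. -/

import Mathlib

open Matrix

namespace Stmt12Aux

variable {n : ℕ}

lemma single_mulVec (i : Fin n) (w : Fin n → ZMod 2) :
    (Matrix.single i i (1 : ZMod 2)) *ᵥ w = Pi.single i (w i) := by
  funext j
  rcases eq_or_ne i j with rfl | h
  · simp [Matrix.mulVec, dotProduct, Matrix.single]
  · simp [Matrix.mulVec, dotProduct, Matrix.single, h, Ne.symm h]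

lemma single_isSymm (i : Fin n) : (Matrix.single i i (1 : ZMod 2)).IsSymm := by
  unfold Matrix.IsSymm
  ext j k
  simp [Matrix.single, and_comm]

lemma single_isDiag (i : Fin n) : (Matrix.single i i (1 : ZMod 2)).IsDiag := by
  intro j k hjk
  simp only [Matrix.single, Matrix.of_apply]
  rw [if_neg]
  rintro ⟨rfl, rfl⟩
  exact hjk rfl

/-- Key lemma: if `AᵀC = CᵀA` and `ker A ∩ ker C = 0`, then some diagonal `K`
makes `A + K * C` invertible.  Induction on the size of the kernel of `A`. -/
lemma key : ∀ (N : ℕ) (A C : Matrix (Fin n) (Fin n) (ZMod 2)),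
    Set.ncard {x : Fin n → ZMod 2 | A *ᵥ x = 0} ≤ N →
    Aᵀ * C = Cᵀ * A →
    (∀ x, A *ᵥ x = 0 → C *ᵥ x = 0 → x = 0) →
    ∃ K : Matrix (Fin n) (Fin n) (ZMod 2), K.IsSymm ∧ K.IsDiag ∧ IsUnit (A + K * C) := by
  intro N
  induction N with
  | zero =>
      intro A C hcard _ _
      exfalso
      have h0 : (0 : Fin n → ZMod 2) ∈ {x : Fin n → ZMod 2 | A *ᵥ x = 0} := by
        simp [Set.mem_setOf_eq, Matrix.mulVec_zero]
      have hfin : {x : Fin n → ZMod 2 | A *ᵥ x = 0}.Finite := Set.toFinite _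
      have := (Set.ncard_eq_zero hfin).mp (Nat.le_zero.mp hcard)
      rw [this] at h0
      exact h0
  | succ N ih =>
      intro A C hcard h1 h2
      by_cases hinj : ∀ x, A *ᵥ x = 0 → x = 0
      · -- A is already invertible
        refine ⟨0, Matrix.isSymm_zero, Matrix.isDiag_zero, ?_⟩
        have hdet : A.det ≠ 0 := by
          intro hdet
          obtain ⟨v, hv, hv0⟩ := (Matrix.exists_mulVec_eq_zero_iff).mpr hdet
          exact hv (hinj v hv0)
        have : IsUnit A := (Matrix.isUnit_iff_isUnit_det A).mpr (isUnit_iff_ne_zero.mpr hdet)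
        simpa using this
      · push_neg at hinj
        obtain ⟨x, hAx, hx⟩ := hinj
        set l : Fin n → ZMod 2 := C *ᵥ x with hl
        have hlne : l ≠ 0 := fun h => hx (h2 x hAx h)
        -- Aᵀ *ᵥ l = 0
        have hAtl : Aᵀ *ᵥ l = 0 := by
          rw [hl, Matrix.mulVec_mulVec, h1, ← Matrix.mulVec_mulVec, hAx, Matrix.mulVec_zero]
        obtain ⟨i, hi⟩ : ∃ i, l i ≠ 0 := by
          by_contra h
          push_neg at h
          exact hlne (funext fun i => h i)
        set D : Matrix (Fin n) (Fin n) (ZMod 2) := Matrix.single i i 1 with hD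
        set A' : Matrix (Fin n) (Fin n) (ZMod 2) := A + D * C with hA'
        have hDsymm : Dᵀ = D := single_isSymm i
        -- new hypotheses
        have h1' : A'ᵀ * C = Cᵀ * A' := by
          rw [hA', Matrix.transpose_add, Matrix.transpose_mul, hDsymm, Matrix.add_mul, h1,
            Matrix.mul_add, Matrix.mul_assoc]
        have h2' : ∀ y, A' *ᵥ y = 0 → C *ᵥ y = 0 → y = 0 := by
          intro y hy hCy
          apply h2 y _ hCy
          have : A' *ᵥ y = A *ᵥ y + D *ᵥ (C *ᵥ y) := by
            rw [hA', Matrix.add_mulVec, Matrix.mulVec_mulVec]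
          rw [this, hCy, Matrix.mulVec_zero, add_zero] at hy
          exact hy
        -- kernel of A' is strictly contained in kernel of A
        have hsub : {y : Fin n → ZMod 2 | A' *ᵥ y = 0} ⊂ {y : Fin n → ZMod 2 | A *ᵥ y = 0} := by
          constructor
          · intro y hy
            simp only [Set.mem_setOf_eq] at hy ⊢
            have hy' : A *ᵥ y + Pi.single i ((C *ᵥ y) i) = 0 := by
              have : A' *ᵥ y = A *ᵥ y + D *ᵥ (C *ᵥ y) := by
                rw [hA', Matrix.add_mulVec, Matrix.mulVec_mulVec]
              rw [this, hD, single_mulVec] at hy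
              exact hy
            -- pair with l
            have hdot : l ⬝ᵥ (A *ᵥ y) = 0 := by
              rw [dotProduct_mulVec, ← Matrix.mulVec_transpose, hAtl,
                zero_dotProduct]
            have h0 : l ⬝ᵥ (A *ᵥ y + Pi.single i ((C *ᵥ y) i)) = 0 := by
              rw [hy', dotProduct_zero]
            rw [dotProduct_add, hdot, zero_add, dotProduct_single] at h0
            have hci : (C *ᵥ y) i = 0 := by
              rcases mul_eq_zero.mp h0 with h | h
              · exact absurd h hi
              · exact h
            rw [hci] at hy'
            simpa using hy'
          · intro hsub'
            have hxmem : x ∈ {y : Fin n → ZMod 2 | A *ᵥ y = 0} := hAx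
            have hxmem' := hsub' hxmem
            simp only [Set.mem_setOf_eq] at hxmem'
            have : A' *ᵥ x = Pi.single i (l i) := by
              rw [hA', Matrix.add_mulVec, ← Matrix.mulVec_mulVec, ← hl, hD, single_mulVec, hAx,
                zero_add]
            rw [this] at hxmem'
            have := congrFun hxmem' i
            simp at this
            exact hi this
        have hcard' : Set.ncard {y : Fin n → ZMod 2 | A' *ᵥ y = 0} ≤ N := by
          have := Set.ncard_lt_ncard hsub (Set.toFinite _)
          omega
        obtain ⟨K', hKs, hKd, hKu⟩ := ih A' C hcard' h1' h2'
        refine ⟨D + K', ?_, ?_, ?_⟩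
        · unfold Matrix.IsSymm
          rw [Matrix.transpose_add, hDsymm, hKs.eq]
        · exact (single_isDiag i).add hKd
        · have : A + (D + K') * C = A' + K' * C := by
            rw [hA', Matrix.add_mul, add_assoc]
          rw [this]
          exact hKu

end Stmt12Aux

/-- For every symplectic matrix `χ` over `𝔽₂` there is a symmetric (indeed diagonal) matrix `K`
such that `[[I,K],[0,I]] · χ` has invertible top-left block. -/
theorem stmt_12 (n : ℕ) (χ : Matrix (Fin n ⊕ Fin n) (Fin n ⊕ Fin n) (ZMod 2))
    (hsymp : χᵀ * Matrix.fromBlocks 0 1 1 0 * χ = Matrix.fromBlocks 0 1 1 0) :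
    ∃ K : Matrix (Fin n) (Fin n) (ZMod 2), K.IsSymm ∧ K.IsDiag ∧
      IsUnit ((Matrix.fromBlocks 1 K 0 1 * χ).toBlocks₁₁) := by
  set A := χ.toBlocks₁₁ with hA
  set B := χ.toBlocks₁₂ with hB
  set C := χ.toBlocks₂₁ with hC
  set D := χ.toBlocks₂₂ with hD
  have hχ : χ = Matrix.fromBlocks A B C D := (Matrix.fromBlocks_toBlocks χ).symm
  -- the symplectic form squares to 1
  have hΩ : (Matrix.fromBlocks 0 1 1 0 : Matrix (Fin n ⊕ Fin n) (Fin n ⊕ Fin n) (ZMod 2)) *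
      Matrix.fromBlocks 0 1 1 0 = 1 := by
    rw [Matrix.fromBlocks_multiply]
    simp [Matrix.fromBlocks_one]
  -- h1 : AᵀC = CᵀA
  have hblocks : Matrix.fromBlocks (Cᵀ * A + Aᵀ * C) (Cᵀ * B + Aᵀ * D)
      (Dᵀ * A + Bᵀ * C) (Dᵀ * B + Bᵀ * D) =
      (Matrix.fromBlocks 0 1 1 0 : Matrix (Fin n ⊕ Fin n) (Fin n ⊕ Fin n) (ZMod 2)) := by
    rw [← hsymp, hχ, Matrix.fromBlocks_transpose, Matrix.fromBlocks_multiply,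
      Matrix.fromBlocks_multiply]
    simp
  have h1 : Aᵀ * C = Cᵀ * A := by
    have := congrArg Matrix.toBlocks₁₁ hblocks
    simp only [Matrix.toBlocks_fromBlocks₁₁] at this
    have h0 : Cᵀ * A + Aᵀ * C = 0 := this
    have : Aᵀ * C = -(Cᵀ * A) := eq_neg_of_add_eq_zero_right h0
    rw [this]
    ext i j
    simp only [Matrix.neg_apply]
    exact (CharTwo.neg_eq _)
  -- χ is invertible, hence ker A ∩ ker C = 0
  have hdetχ : IsUnit χ.det := by
    have hdet := congrArg Matrix.det hsymp
    rw [Matrix.det_mul, Matrix.det_mul, Matrix.det_transpose] at hdet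
    have hΩu : IsUnit (Matrix.fromBlocks 0 1 1 0 :
        Matrix (Fin n ⊕ Fin n) (Fin n ⊕ Fin n) (ZMod 2)).det := by
      apply IsUnit.of_mul_eq_one (Matrix.fromBlocks 0 1 1 0 :
        Matrix (Fin n ⊕ Fin n) (Fin n ⊕ Fin n) (ZMod 2)).det
      rw [← Matrix.det_mul, hΩ, Matrix.det_one]
    have h' : (Matrix.fromBlocks 0 1 1 0 : Matrix (Fin n ⊕ Fin n) (Fin n ⊕ Fin n)
        (ZMod 2)).det * (χ.det * χ.det) = (Matrix.fromBlocks 0 1 1 0 :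
        Matrix (Fin n ⊕ Fin n) (Fin n ⊕ Fin n) (ZMod 2)).det * 1 := by
      linear_combination hdet
    exact IsUnit.of_mul_eq_one _ (hΩu.mul_left_cancel h')
  have h2 : ∀ x, A *ᵥ x = 0 → C *ᵥ x = 0 → x = 0 := by
    intro x hAx hCx
    have hvec : χ *ᵥ Sum.elim x 0 = 0 := by
      rw [hχ, Matrix.fromBlocks_mulVec]
      simp [hAx, hCx]
    have : Sum.elim x (0 : Fin n → ZMod 2) = 0 := by
      have h := congrArg (fun v => χ⁻¹ *ᵥ v) hvec
      simpa [Matrix.mulVec_mulVec, Matrix.nonsing_inv_mul χ hdetχ] using h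
    funext i
    exact congrFun this (Sum.inl i)
  obtain ⟨K, hKs, hKd, hKu⟩ := Stmt12Aux.key (Set.ncard {x : Fin n → ZMod 2 | A *ᵥ x = 0})
    A C le_rfl h1 h2
  refine ⟨K, hKs, hKd, ?_⟩
  have : (Matrix.fromBlocks 1 K 0 1 * χ).toBlocks₁₁ = A + K * C := by
    rw [hχ, Matrix.fromBlocks_multiply]
    simp [Matrix.toBlocks_fromBlocks₁₁]
  rw [this]
  exact hKu
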